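/- Let γ₁ and γ₂ be two asymptotically regular semitrajectories in G = ℝ × ℝ³. Then the following are equivalent: (i) ω(γ₁) = ω(γ₂); (ii) there exists an asymptotically identical transformation f of G such that γ₂ = f(γ₁) (as subsets of G). -/

import Mathlib

open Filter Topology Set

noncomputable section

/-- Euclidean 3-space. -/
abbrev E3 : Type := EuclideanSpace ℝ (Fin 3)

/-- The Galilean space-time `G = ℝ × ℝ³`. -/
abbrev Gal : Type := ℝ × E3

/-- A transformation (homeomorphism) of `G` is causal if it preserves the time
ordering of events: `P_T(u) < P_T(w)` implies `P_T(f(u)) < P_T(f(w))`. -/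
def Causal (f : Gal ≃ₜ Gal) : Prop :=
  ∀ u w : Gal, u.1 < w.1 → (f u).1 < (f w).1

/-- The semitrajectory in `G` which is the graph of the curve `γ` on `[t₀, ∞)`. -/
def semitraj (t₀ : ℝ) (γ : ℝ → E3) : Set Gal :=
  (fun t => (t, γ t)) '' Set.Ici t₀

/-- `S ⊆ G` is a semitrajectory: the graph of a continuous curve `γ : [t₀, ∞) → ℝ³`. -/
def IsSemitraj (S : Set Gal) : Prop :=
  ∃ (t₀ : ℝ) (γ : ℝ → E3), ContinuousOn γ (Set.Ici t₀) ∧ S = semitraj t₀ γ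

/-- `S` is an asymptotically regular semitrajectory with asymptotic velocity `v`,
i.e. `S` is the graph of a continuous curve `γ : [t₀, ∞) → ℝ³` with `γ(t)/t → v`. -/
def HasAsympVel (S : Set Gal) (v : E3) : Prop :=
  ∃ (t₀ : ℝ) (γ : ℝ → E3), ContinuousOn γ (Set.Ici t₀) ∧ S = semitraj t₀ γ ∧
    Tendsto (fun t : ℝ => t⁻¹ • γ t) atTop (𝓝 v)

/-- `F` is the asymptotic transform of `f`: for every `v`, every asymptotically regular
semitrajectory `S` with `ω(S) = v` has `ω(f(S)) = F v`.  (In particular the existence of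
such an `F` says exactly that `f` is asymptotically regular at every point.) -/
def IsAsympTransform (f : Gal ≃ₜ Gal) (F : E3 → E3) : Prop :=
  ∀ (v : E3) (S : Set Gal), HasAsympVel S v → HasAsympVel (f '' S) (F v)

/-- `f` is asymptotically regular: at every `v ∈ V` there is a `v′` such that every
asymptotically regular semitrajectory with asymptotic velocity `v` is mapped to one with
asymptotic velocity `v′`. -/
def AsympReg (f : Gal ≃ₜ Gal) : Prop :=
  ∃ F : E3 → E3, IsAsympTransform f F

/-- `f` is an asymptotic homeomorphism: both `f` and `f⁻¹` are asymptotically regular. -/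
def AsympHomeo (f : Gal ≃ₜ Gal) : Prop := AsympReg f ∧ AsympReg f.symm

/-- `f` is an asymptotically identical transformation: a causal asymptotic
homeomorphism with `f⁺ = id`. -/
def AsympIdentical (f : Gal ≃ₜ Gal) : Prop :=
  Causal f ∧ AsympHomeo f ∧ IsAsympTransform f (id : E3 → E3)

/-- `f` is an asymptotically Euclidean transformation: a causal asymptotic
homeomorphism with `f⁺(v) = R v − v₀` for some orthogonal `R` and `v₀ ∈ ℝ³`. -/
def AsympEuclidean (f : Gal ≃ₜ Gal) : Prop :=
  Causal f ∧ AsympHomeo f ∧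
    ∃ (R : E3 ≃ₗᵢ[ℝ] E3) (v₀ : E3), IsAsympTransform f (fun v => R v - v₀)

/-! ### Auxiliary lemmas -/

lemma mem_semitraj {t₀ : ℝ} {γ : ℝ → E3} {p : Gal} :
    p ∈ semitraj t₀ γ ↔ t₀ ≤ p.1 ∧ p.2 = γ p.1 := by
  constructor
  · rintro ⟨t, ht, rfl⟩; exact ⟨ht, rfl⟩
  · rintro ⟨h1, h2⟩; exact ⟨p.1, h1, Prod.ext rfl h2.symm⟩

lemma semitraj_congr {t₀ : ℝ} {γ δ : ℝ → E3} (h : ∀ t ∈ Set.Ici t₀, γ t = δ t) :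
    semitraj t₀ γ = semitraj t₀ δ := by
  unfold semitraj
  exact Set.image_congr (fun t ht => by rw [h t ht])

/-- Uniqueness of asymptotic velocity. -/
lemma vel_unique {S : Set Gal} {v w : E3} (hv : HasAsympVel S v) (hw : HasAsympVel S w) :
    v = w := by
  obtain ⟨t₀, γ, _, rfl, hv⟩ := hv
  obtain ⟨t₁, δ, _, hS, hw⟩ := hw
  have hEq : ∀ᶠ t in atTop, (fun t : ℝ => t⁻¹ • δ t) t = (fun t : ℝ => t⁻¹ • γ t) t := by
    filter_upwards [eventually_ge_atTop (max t₀ t₁)] with t ht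
    have h1 : ((t, γ t) : Gal) ∈ semitraj t₀ γ :=
      mem_semitraj.mpr ⟨le_trans (le_max_left _ _) ht, rfl⟩
    rw [hS] at h1
    obtain ⟨_, h2⟩ := mem_semitraj.mp h1
    have h3 : γ t = δ t := h2
    rw [h3]
  exact tendsto_nhds_unique hv (hw.congr' hEq)

/-- Shifting the argument does not change the asymptotic velocity. -/
lemma tendsto_shift {v : E3} {δ : ℝ → E3} (c : ℝ)
    (h : Tendsto (fun t : ℝ => t⁻¹ • δ t) atTop (𝓝 v)) :
    Tendsto (fun s : ℝ => s⁻¹ • δ (s - c)) atTop (𝓝 v) := by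
  have hmap : Tendsto (fun s : ℝ => s - c) atTop atTop :=
    (tendsto_atTop_add_const_right atTop (-c) tendsto_id).congr
      (fun s => by simp [sub_eq_add_neg])
  have h1 : Tendsto (fun s : ℝ => (s - c)⁻¹ • δ (s - c)) atTop (𝓝 v) := h.comp hmap
  have h2 : Tendsto (fun s : ℝ => s⁻¹ * (s - c)) atTop (𝓝 1) := by
    have : Tendsto (fun s : ℝ => 1 - c * s⁻¹) atTop (𝓝 (1 - c * 0)) :=
      tendsto_const_nhds.sub (tendsto_inv_atTop_zero.const_mul c)
    rw [mul_zero, sub_zero] at this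
    refine this.congr' ?_
    filter_upwards [eventually_ne_atTop (0 : ℝ)] with s hs
    field_simp
  have h3 : Tendsto (fun s : ℝ => (s⁻¹ * (s - c)) • ((s - c)⁻¹ • δ (s - c)))
      atTop (𝓝 ((1 : ℝ) • v)) := h2.smul h1
  rw [one_smul] at h3
  refine h3.congr' ?_
  filter_upwards [eventually_gt_atTop (|c| + 1)] with s hs
  have hsc : s - c ≠ 0 := by
    have := abs_nonneg c
    have := le_abs_self c
    intro h'; nlinarith [neg_abs_le c]
  rw [smul_smul, mul_assoc, mul_inv_cancel₀ hsc, mul_one]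

/-- The image of a semitrajectory under a "shear" transformation. -/
lemma image_shear (f : Gal ≃ₜ Gal) (c : ℝ) (g : ℝ → E3)
    (hf : ∀ p : Gal, f p = (p.1 + c, p.2 + g p.1)) (t₀ : ℝ) (δ : ℝ → E3) :
    f '' semitraj t₀ δ = semitraj (t₀ + c) (fun s => δ (s - c) + g (s - c)) := by
  have hsymm : ∀ p : Gal, f.symm p = (p.1 - c, p.2 - g (p.1 - c)) := by
    intro p
    apply f.injective
    rw [f.apply_symm_apply, hf]
    rw [Prod.ext_iff]
    exact ⟨by ring, by simp⟩
  have himg : ∀ q : Gal, q ∈ f '' semitraj t₀ δ ↔ f.symm q ∈ semitraj t₀ δ := by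
    intro q
    constructor
    · rintro ⟨r, hr, rfl⟩; rwa [f.symm_apply_apply]
    · intro h; exact ⟨f.symm q, h, f.apply_symm_apply q⟩
  ext p
  rw [himg p, hsymm, mem_semitraj, mem_semitraj]
  dsimp only
  constructor
  · rintro ⟨h1, h2⟩
    refine ⟨by linarith, ?_⟩
    rw [← h2]; simp
  · rintro ⟨h1, h2⟩
    refine ⟨by linarith, ?_⟩
    rw [h2]; simp

/-- A shear transformation whose slope goes to `0` is asymptotically identical. -/
lemma shear_asympTransform (f : Gal ≃ₜ Gal) (c : ℝ) (g : ℝ → E3)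
    (hf : ∀ p : Gal, f p = (p.1 + c, p.2 + g p.1))
    (h0 : Tendsto (fun t : ℝ => t⁻¹ • g t) atTop (𝓝 0)) :
    IsAsympTransform f (id : E3 → E3) := by
  have hgc : Continuous g := by
    have hc : Continuous fun t : ℝ => (f (t, (0 : E3))).2 :=
      continuous_snd.comp (f.continuous.comp (continuous_id.prodMk continuous_const))
    have : (fun t : ℝ => (f (t, (0 : E3))).2) = g := by
      funext t; rw [hf]; simp
    rwa [this] at hc
  rintro v S ⟨t₀, δ, hδc, rfl, hδv⟩
  refine ⟨t₀ + c, fun s => δ (s - c) + g (s - c), ?_, image_shear f c g hf t₀ δ, ?_⟩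
  · apply ContinuousOn.add
    · exact hδc.comp ((continuous_sub_right c).continuousOn)
        (fun s hs => by simpa using sub_le_sub_right hs c)
    · exact ((hgc.comp (continuous_sub_right c)).continuousOn)
  · have h1 := tendsto_shift c hδv
    have h2 := tendsto_shift c h0
    have h3 := h1.add h2
    rw [add_zero] at h3
    refine Tendsto.congr (fun s => ?_) h3
    simp [smul_add]

/-- Let `γ₁` and `γ₂` be two asymptotically regular semitrajectories in
`G = ℝ × ℝ³`, with asymptotic velocities `v₁` and `v₂`.  Then `ω(γ₁) = ω(γ₂)` if and only
if there exists an asymptotically identical transformation `f` of `G` with `γ₂ = f(γ₁)`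
(as subsets of `G`). -/
theorem stmt16 (S₁ S₂ : Set Gal) (v₁ v₂ : E3)
    (h₁ : HasAsympVel S₁ v₁) (h₂ : HasAsympVel S₂ v₂) :
    v₁ = v₂ ↔ ∃ f : Gal ≃ₜ Gal, AsympIdentical f ∧ S₂ = f '' S₁ := by
  constructor
  · -- forward direction: construct the shear transformation
    intro hv
    obtain ⟨t₀, γ₁, hγ₁c, hS₁, hγ₁v⟩ := h₁
    obtain ⟨t₁, γ₂, hγ₂c, hS₂, hγ₂v⟩ := h₂
    -- extend the curves to all of ℝ
    set b₁ : ℝ → E3 := fun t => γ₁ (max t t₀) with hb₁def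
    set b₂ : ℝ → E3 := fun t => γ₂ (max t t₁) with hb₂def
    have hb₁c : Continuous b₁ :=
      hγ₁c.comp_continuous (continuous_id.max continuous_const) (fun t => Set.mem_Ici.mpr (le_max_right _ _))
    have hb₂c : Continuous b₂ :=
      hγ₂c.comp_continuous (continuous_id.max continuous_const) (fun t => Set.mem_Ici.mpr (le_max_right _ _))
    have hb₁eq : ∀ t ∈ Set.Ici t₀, γ₁ t = b₁ t := fun t ht => by
      simp only [hb₁def]; rw [max_eq_left ht]
    have hb₂eq : ∀ t ∈ Set.Ici t₁, γ₂ t = b₂ t := fun t ht => by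
      simp only [hb₂def]; rw [max_eq_left ht]
    have hb₁v : Tendsto (fun t : ℝ => t⁻¹ • b₁ t) atTop (𝓝 v₁) := by
      refine hγ₁v.congr' ?_
      filter_upwards [eventually_ge_atTop t₀] with t ht
      rw [hb₁eq t ht]
    have hb₂v : Tendsto (fun t : ℝ => t⁻¹ • b₂ t) atTop (𝓝 v₂) := by
      refine hγ₂v.congr' ?_
      filter_upwards [eventually_ge_atTop t₁] with t ht
      rw [hb₂eq t ht]
    set c : ℝ := t₁ - t₀ with hcdef
    set g : ℝ → E3 := fun t => b₂ (t + c) - b₁ t with hgdef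
    have hgc : Continuous g := (hb₂c.comp (continuous_add_right c)).sub hb₁c
    -- the shear homeomorphism
    set f : Gal ≃ₜ Gal :=
      { toFun := fun p => (p.1 + c, p.2 + g p.1)
        invFun := fun p => (p.1 - c, p.2 - g (p.1 - c))
        left_inv := fun p => by simp
        right_inv := fun p => by simp
        continuous_toFun := by
          exact ((continuous_fst.add continuous_const).prodMk
            (continuous_snd.add (hgc.comp continuous_fst)))
        continuous_invFun := by
          exact ((continuous_fst.sub continuous_const).prodMk
            (continuous_snd.sub (hgc.comp (continuous_fst.sub continuous_const)))) } with hfdef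
    have hf : ∀ p : Gal, f p = (p.1 + c, p.2 + g p.1) := fun p => rfl
    have hfsymm : ∀ p : Gal, f.symm p = (p.1 + (-c), p.2 + (- g (p.1 + (-c)))) := by
      intro p
      show (p.1 - c, p.2 - g (p.1 - c)) = _
      ext <;> simp [sub_eq_add_neg]
    -- asymptotic slope of g goes to 0
    have hg0 : Tendsto (fun t : ℝ => t⁻¹ • g t) atTop (𝓝 0) := by
      have h1 : Tendsto (fun t : ℝ => t⁻¹ • b₂ (t - (-c))) atTop (𝓝 v₂) :=
        tendsto_shift (-c) hb₂v
      have h2 := h1.sub hb₁v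
      rw [hv, sub_self] at h2
      refine h2.congr (fun t => ?_)
      simp only [hgdef, smul_sub, sub_neg_eq_add]
    have hg0' : Tendsto (fun t : ℝ => t⁻¹ • (- g (t - c))) atTop (𝓝 0) := by
      have := (tendsto_shift c hg0).neg
      rw [neg_zero] at this
      refine this.congr (fun t => ?_)
      simp
    have hT : IsAsympTransform f (id : E3 → E3) := shear_asympTransform f c g hf hg0
    have hTsymm : IsAsympTransform f.symm (id : E3 → E3) := by
      refine shear_asympTransform f.symm (-c) (fun t => - g (t + (-c))) hfsymm ?_
      refine hg0'.congr (fun t => ?_)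
      rw [sub_eq_add_neg]
    refine ⟨f, ⟨?_, ⟨⟨id, hT⟩, ⟨id, hTsymm⟩⟩, hT⟩, ?_⟩
    · intro u w huw
      show u.1 + c < w.1 + c
      linarith
    · -- S₂ = f '' S₁
      rw [hS₁, hS₂, semitraj_congr hb₁eq, semitraj_congr hb₂eq,
        image_shear f c g hf t₀ b₁]
      have ht : t₀ + c = t₁ := by rw [hcdef]; ring
      rw [← ht]
      refine (semitraj_congr (fun s _ => ?_)).symm
      simp only [hgdef]
      have : s - c + c = s := by ring
      rw [this]; abel
  · -- backward direction: uniqueness of asymptotic velocity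
    rintro ⟨f, ⟨_, _, hid⟩, rfl⟩
    have := hid v₁ S₁ h₁
    exact vel_unique this h₂
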